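/- Let g : (0,∞) → ℝ be continuous with g(ρ) < 0 for all ρ, g(ρ)/ρ² → 0 as ρ → 0⁺ and as ρ → ∞, and satisfying g(ρ) ≤ g(μ) + g(√(ρ²-μ²)) for 0 < μ < ρ. If h(ρ) := g(ρ)/ρ² attains a global minimum at ρ₀ > 0, then h(√k · ρ₀) = h(ρ₀) for every positive integer k. -/

import Mathlib

open Set Filter

theorem minimum_propagates (g : ℝ → ℝ)
    (hcont : ContinuousOn g (Ioi 0))
    (hneg : ∀ ρ : ℝ, 0 < ρ → g ρ < 0)
    (hlim0 : Tendsto (fun ρ => g ρ / ρ^2) (nhdsWithin 0 (Ioi 0)) (nhds 0))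
    (hliminf : Tendsto (fun ρ => g ρ / ρ^2) atTop (nhds 0))
    (hsub : ∀ ρ μ : ℝ, 0 < μ → μ < ρ → g ρ ≤ g μ + g (Real.sqrt (ρ^2 - μ^2)))
    (ρ₀ : ℝ) (hρ₀ : 0 < ρ₀)
    (hmin : ∀ ρ : ℝ, 0 < ρ → g ρ₀ / ρ₀^2 ≤ g ρ / ρ^2) :
    ∀ k : ℕ, 0 < k → g (Real.sqrt k * ρ₀) / (Real.sqrt k * ρ₀)^2 = g ρ₀ / ρ₀^2 := by
  intro k
  induction k with
  | zero => intro h; exact absurd h (lt_irrefl 0)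
  | succ n ih =>
    intro _
    rcases Nat.eq_zero_or_pos n with hn | hn
    · subst hn
      norm_num
    · have IH := ih hn
      set h₀ := g ρ₀ / ρ₀^2 with hh₀
      have hsn : (0:ℝ) < Real.sqrt n := Real.sqrt_pos.mpr (by positivity)
      have hsn1 : (0:ℝ) < Real.sqrt (n+1) := Real.sqrt_pos.mpr (by positivity)
      have hμ : (0:ℝ) < Real.sqrt n * ρ₀ := by positivity
      have hρ : (0:ℝ) < Real.sqrt (n+1) * ρ₀ := by positivity
      have hlt : Real.sqrt n * ρ₀ < Real.sqrt (n+1) * ρ₀ := by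
        apply mul_lt_mul_of_pos_right _ hρ₀
        exact Real.sqrt_lt_sqrt (by positivity) (by norm_num)
      have hsq : (Real.sqrt n * ρ₀)^2 = n * ρ₀^2 := by
        rw [mul_pow, Real.sq_sqrt (by positivity : (0:ℝ) ≤ (n:ℝ))]
      have hsq1 : (Real.sqrt (n+1) * ρ₀)^2 = (n+1) * ρ₀^2 := by
        rw [mul_pow, Real.sq_sqrt (by positivity : (0:ℝ) ≤ ((n:ℝ)+1))]
      have hdiff : (Real.sqrt (n+1) * ρ₀)^2 - (Real.sqrt n * ρ₀)^2 = ρ₀^2 := by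
        rw [hsq, hsq1]; ring
      have hsub' := hsub (Real.sqrt (n+1) * ρ₀) (Real.sqrt n * ρ₀) hμ hlt
      rw [hdiff, Real.sqrt_sq hρ₀.le] at hsub'
      have hg_n : g (Real.sqrt n * ρ₀) = h₀ * ((n:ℝ) * ρ₀^2) := by
        have := IH
        field_simp [hsq, ne_of_gt hρ₀] at this ⊢
        rw [this, Real.sq_sqrt (Nat.cast_nonneg n)]; ring
      have hg0 : g ρ₀ = h₀ * ρ₀^2 := by
        rw [hh₀, div_mul_cancel₀ _ (by positivity)]
      have hle : g (Real.sqrt (n+1) * ρ₀) ≤ h₀ * ((n+1) * ρ₀^2) := by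
        rw [hg_n, hg0] at hsub'
        nlinarith [hsub']
      have hpossq : (0:ℝ) < (Real.sqrt (n+1) * ρ₀)^2 := by positivity
      have h1 : g (Real.sqrt (n+1) * ρ₀) / (Real.sqrt (n+1) * ρ₀)^2 ≤ h₀ := by
        rw [div_le_iff₀ hpossq, hsq1]
        linarith [hle]
      have h2 := hmin (Real.sqrt (n+1) * ρ₀) hρ
      have : g (Real.sqrt ((n:ℝ)+1) * ρ₀) / (Real.sqrt ((n:ℝ)+1) * ρ₀)^2 = h₀ :=
        le_antisymm h1 h2
      simpa [Nat.cast_add, Nat.cast_one] using this
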